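/- Let p be a prime with p ≡ 1 (mod 4). There exists a 3×3 matrix M over ZMod p such that every entry of M is a square in ZMod p, the central entry of M is 0, all eight other entries of M are nonzero, and every row, every column, and both main diagonals of M sum to 0, if and only if there exists n in ZMod p such that n, n+1, and n+2 are all nonzero squares in ZMod p. -/

import Mathlib

theorem nontrivial_residue_class_iff_three_consecutive_qr
    (p : ℕ) (hp : p.Prime) (hp1 : p % 4 = 1) :
    (∃ M : Matrix (Fin 3) (Fin 3) (ZMod p),
      (∀ r c, IsSquare (M r c)) ∧
      M 1 1 = 0 ∧
      (∀ r c : Fin 3, (r, c) ≠ (1, 1) → M r c ≠ 0) ∧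
      M 0 0 + M 0 1 + M 0 2 = 0 ∧ M 1 0 + M 1 1 + M 1 2 = 0 ∧
      M 2 0 + M 2 1 + M 2 2 = 0 ∧ M 0 0 + M 1 0 + M 2 0 = 0 ∧
      M 0 1 + M 1 1 + M 2 1 = 0 ∧ M 0 2 + M 1 2 + M 2 2 = 0 ∧
      M 0 0 + M 1 1 + M 2 2 = 0 ∧ M 0 2 + M 1 1 + M 2 0 = 0) ↔
    (∃ n : ZMod p, (n ≠ 0 ∧ IsSquare n) ∧ (n + 1 ≠ 0 ∧ IsSquare (n + 1)) ∧
      (n + 2 ≠ 0 ∧ IsSquare (n + 2))) := by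
  haveI : Fact p.Prime := ⟨hp⟩
  have hneg1 : IsSquare (-1 : ZMod p) := by
    rw [ZMod.exists_sq_eq_neg_one_iff]
    omega
  constructor
  · rintro ⟨M, hsq, h11, hne, hr0, hr1, hr2, hc0, hc1, hc2, hd, had⟩
    set a := M 0 0 with ha
    set b := M 0 2 with hb
    have h12 : M 1 2 = a - b := by linear_combination hr1 - hc0 + had - 2 * h11
    have h21 : M 2 1 = a + b := by linear_combination hc1 - hr0 - h11
    have hbne : b ≠ 0 := hne 0 2 (by decide)
    have hane : a ≠ 0 := hne 0 0 (by decide)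
    have h12ne : a - b ≠ 0 := h12 ▸ hne 1 2 (by decide)
    have h21ne : a + b ≠ 0 := h21 ▸ hne 2 1 (by decide)
    obtain ⟨x, hx⟩ : IsSquare (a - b) := h12 ▸ hsq 1 2
    obtain ⟨y, hy⟩ : IsSquare b := hsq 0 2
    obtain ⟨z, hz⟩ : IsSquare (a + b) := h21 ▸ hsq 2 1
    obtain ⟨w, hw⟩ : IsSquare a := hsq 0 0
    have hyne : y ≠ 0 := fun h => hbne (by simp [hy, h])
    have e1 : (a - b) * b⁻¹ + 1 = a * b⁻¹ := by field_simp; ring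
    have e2 : (a - b) * b⁻¹ + 2 = (a + b) * b⁻¹ := by field_simp; ring
    refine ⟨(a - b) * b⁻¹, ⟨?_, ⟨x * y⁻¹, ?_⟩⟩, ⟨?_, ⟨w * y⁻¹, ?_⟩⟩, ⟨?_, ⟨z * y⁻¹, ?_⟩⟩⟩
    · exact mul_ne_zero h12ne (inv_ne_zero hbne)
    · rw [hx, hy, mul_inv]; ring
    · rw [e1]; exact mul_ne_zero hane (inv_ne_zero hbne)
    · rw [e1, hw, hy, mul_inv]; ring
    · rw [e2]; exact mul_ne_zero h21ne (inv_ne_zero hbne)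
    · rw [e2, hz, hy, mul_inv]; ring
  · rintro ⟨n, ⟨hn0, hn⟩, ⟨hn1, hn1s⟩, ⟨hn2, hn2s⟩⟩
    have negsq : ∀ m : ZMod p, IsSquare m → IsSquare (-m) := by
      intro m hm
      rw [show -m = (-1) * m by ring]
      exact hneg1.mul hm
    refine ⟨!![n+1, -(n+2), 1; -n, 0, n; -1, n+2, -(n+1)], ?_, by simp, ?_, ?_, ?_, ?_, ?_, ?_, ?_, ?_, ?_⟩
    · intro r c
      fin_cases r <;> fin_cases c <;> simp <;>
        first
          | exact hn1s
          | exact hn2s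
          | exact hn
          | exact isSquare_one
          | exact hneg1
          | (rw [show (-2 + -n : ZMod p) = -(n+2) by ring]; exact negsq _ hn2s)
          | (rw [show (-1 + -n : ZMod p) = -(n+1) by ring]; exact negsq _ hn1s)
          | exact negsq _ hn
    · intro r c hrc
      fin_cases r <;> fin_cases c <;> simp at hrc ⊢ <;>
        first
          | exact hn1
          | exact hn2
          | exact hn0
          | exact one_ne_zero
          | (intro h; exact hn2 (by linear_combination -h))
          | (intro h; exact hn1 (by linear_combination -h))
    all_goals simp <;> ring
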